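/- With the notation of Section 4, for all u, v ∈ ℕ and k, n ≥ 1 the recurrence d_{(2k+3)_{a²}}(u,v,n) = d_{(2k+2)_{ab}}(u,v,n) + d_{(2k+1)_{ab}}(u−1, v, n−(2k+2)) + d_{(2k)_{ab}}(u−2, v, n−(2k+3)) holds; equivalently, in terms of generating functions, G_{(2k+3)_{a²}}(a,b,q) = G_{(2k+2)_{ab}}(a,b,q) + aq^{2k+2} G_{(2k+1)_{ab}}(a,b,q) + a²q^{2k+3} G_{(2k)_{ab}}(a,b,q). -/

import Mathlib

/-- The five colours a, b, ab, a², b². -/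
inductive Col where
  | a | b | ab | aa | bb
deriving DecidableEq, Inhabited

open Col

/-- Position of a coloured integer in the ordering
1_{ab} < 1_a < 1_{b²} < 1_b < 2_{ab} < 2_a < 3_{a²} < 2_b < 3_{ab} < ⋯ . -/
def colPos : ℕ × Col → ℕ
  | (k, Col.ab) => 4 * k - 4
  | (k, Col.a)  => 4 * k - 3
  | (k, Col.bb) => 4 * k - 2
  | (k, Col.b)  => 4 * k - 1
  | (k, Col.aa) => 4 * k - 6

/-- Entry of the matrix A: minimal gap below a part of size `k` and colour `x`,
above a part of colour `y`. -/
def colMinGap (k : ℕ) (x y : Col) : ℕ :=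
  match x, y with
  | Col.a, y => if k % 2 = 1 then
      (match y with | Col.ab => 1 | _ => 2)
    else
      (match y with | Col.aa => 3 | Col.bb => 3 | _ => 2)
  | Col.bb, y => (match y with | Col.b => 3 | Col.bb => 4 | _ => 2)
  | Col.b, y => if k % 2 = 1 then
      (match y with | Col.a => 1 | Col.ab => 1 | _ => 2)
    else
      (match y with | Col.a => 1 | Col.ab => 1 | Col.aa => 1 | Col.bb => 3 | _ => 2)
  | Col.ab, y => if k % 2 = 0 then
      (match y with | Col.aa => 3 | Col.bb => 3 | _ => 2)
    else
      (match y with | Col.b => 3 | Col.bb => 3 | _ => 2)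
  | Col.aa, y => (match y with | Col.aa => 4 | Col.bb => 4 | _ => 3)

/-- A coloured partition as in the non-dilated Siladić theorem: parts are coloured
positive integers, squared colours only occur on odd integers, there is no part
1_{ab} or 1_{b²}, and consecutive parts satisfy the gap conditions of matrix A. -/
def IsColPartition (l : List (ℕ × Col)) : Prop :=
  (∀ p ∈ l, 1 ≤ p.1 ∧ ((p.2 = Col.aa ∨ p.2 = Col.bb) → p.1 % 2 = 1) ∧
    p ≠ (1, Col.ab) ∧ p ≠ (1, Col.bb)) ∧
  ∀ i, i + 1 < l.length →
    l[i]!.1 ≥ l[i+1]!.1 + colMinGap l[i]!.1 l[i]!.2 l[i+1]!.2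

/-- Number of parts coloured a or ab, plus twice the number of parts coloured a². -/
def aCt (l : List (ℕ × Col)) : ℕ :=
  (l.countP fun p => p.2 == Col.a || p.2 == Col.ab) +
    2 * (l.countP fun p => p.2 == Col.aa)

/-- Number of parts coloured b or ab, plus twice the number of parts coloured b². -/
def bCt (l : List (ℕ × Col)) : ℕ :=
  (l.countP fun p => p.2 == Col.b || p.2 == Col.ab) +
    2 * (l.countP fun p => p.2 == Col.bb)

/-- D(u,v,n): coloured partitions of n with a-count u and b-count v. -/
noncomputable def Dct (u v n : ℕ) : ℕ :=
  Nat.card {l : List (ℕ × Col) // IsColPartition l ∧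
    (l.map Prod.fst).sum = n ∧ aCt l = u ∧ bCt l = v}

/-- d_K(u,v,n): as D(u,v,n) but with largest part at most K in the coloured order;
integer arguments (negative values give 0). -/
noncomputable def dct (K : ℕ × Col) (u v n : ℤ) : ℕ :=
  Nat.card {l : List (ℕ × Col) // IsColPartition l ∧
    (∀ p ∈ l, colPos p ≤ colPos K) ∧
    ((l.map Prod.fst).sum : ℤ) = n ∧ (aCt l : ℤ) = u ∧ (bCt l : ℤ) = v}

/-- e_K(u,v,n): as d_K(u,v,n) but with largest part exactly K. -/
noncomputable def ect (K : ℕ × Col) (u v n : ℤ) : ℕ :=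
  Nat.card {l : List (ℕ × Col) // IsColPartition l ∧
    (∀ p ∈ l, colPos p ≤ colPos K) ∧ l ≠ [] ∧ l.head! = K ∧
    ((l.map Prod.fst).sum : ℤ) = n ∧ (aCt l : ℤ) = u ∧ (bCt l : ℤ) = v}

/-- The generating function G_K(a,b,q) = 1 + ∑_{u,v≥0,n≥1} d_K(u,v,n) aᵘbᵛqⁿ,
as a formal power series in the variables a = X 0, b = X 1, q = X 2. -/
noncomputable def Gf (K : ℕ × Col) : MvPowerSeries (Fin 3) ℚ :=
  fun e => (dct K (e 0) (e 1) (e 2) : ℚ)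


namespace SilAux
@[simp] lemma gap_a_a (s : ℕ) : colMinGap s Col.a Col.a = if s % 2 = 1 then 2 else 2 := rfl
@[simp] lemma gap_a_b (s : ℕ) : colMinGap s Col.a Col.b = if s % 2 = 1 then 2 else 2 := rfl
@[simp] lemma gap_a_ab (s : ℕ) : colMinGap s Col.a Col.ab = if s % 2 = 1 then 1 else 2 := rfl
@[simp] lemma gap_a_aa (s : ℕ) : colMinGap s Col.a Col.aa = if s % 2 = 1 then 2 else 3 := rfl
@[simp] lemma gap_a_bb (s : ℕ) : colMinGap s Col.a Col.bb = if s % 2 = 1 then 2 else 3 := rfl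
@[simp] lemma gap_b_a (s : ℕ) : colMinGap s Col.b Col.a = if s % 2 = 1 then 1 else 1 := rfl
@[simp] lemma gap_b_b (s : ℕ) : colMinGap s Col.b Col.b = if s % 2 = 1 then 2 else 2 := rfl
@[simp] lemma gap_b_ab (s : ℕ) : colMinGap s Col.b Col.ab = if s % 2 = 1 then 1 else 1 := rfl
@[simp] lemma gap_b_aa (s : ℕ) : colMinGap s Col.b Col.aa = if s % 2 = 1 then 2 else 1 := rfl
@[simp] lemma gap_b_bb (s : ℕ) : colMinGap s Col.b Col.bb = if s % 2 = 1 then 2 else 3 := rfl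
@[simp] lemma gap_ab_a (s : ℕ) : colMinGap s Col.ab Col.a = if s % 2 = 0 then 2 else 2 := rfl
@[simp] lemma gap_ab_b (s : ℕ) : colMinGap s Col.ab Col.b = if s % 2 = 0 then 2 else 3 := rfl
@[simp] lemma gap_ab_ab (s : ℕ) : colMinGap s Col.ab Col.ab = if s % 2 = 0 then 2 else 2 := rfl
@[simp] lemma gap_ab_aa (s : ℕ) : colMinGap s Col.ab Col.aa = if s % 2 = 0 then 3 else 2 := rfl
@[simp] lemma gap_ab_bb (s : ℕ) : colMinGap s Col.ab Col.bb = if s % 2 = 0 then 3 else 3 := rfl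
@[simp] lemma gap_aa_a (s : ℕ) : colMinGap s Col.aa Col.a = 3 := rfl
@[simp] lemma gap_aa_b (s : ℕ) : colMinGap s Col.aa Col.b = 3 := rfl
@[simp] lemma gap_aa_ab (s : ℕ) : colMinGap s Col.aa Col.ab = 3 := rfl
@[simp] lemma gap_aa_aa (s : ℕ) : colMinGap s Col.aa Col.aa = 4 := rfl
@[simp] lemma gap_aa_bb (s : ℕ) : colMinGap s Col.aa Col.bb = 4 := rfl
@[simp] lemma gap_bb_a (s : ℕ) : colMinGap s Col.bb Col.a = 2 := rfl
@[simp] lemma gap_bb_b (s : ℕ) : colMinGap s Col.bb Col.b = 3 := rfl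
@[simp] lemma gap_bb_ab (s : ℕ) : colMinGap s Col.bb Col.ab = 2 := rfl
@[simp] lemma gap_bb_aa (s : ℕ) : colMinGap s Col.bb Col.aa = 2 := rfl
@[simp] lemma gap_bb_bb (s : ℕ) : colMinGap s Col.bb Col.bb = 4 := rfl
end SilAux
namespace SilAux
@[simp] lemma pos_a (s : ℕ) : colPos (s, Col.a) = 4*s-3 := rfl
@[simp] lemma pos_b (s : ℕ) : colPos (s, Col.b) = 4*s-1 := rfl
@[simp] lemma pos_ab (s : ℕ) : colPos (s, Col.ab) = 4*s-4 := rfl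
@[simp] lemma pos_aa (s : ℕ) : colPos (s, Col.aa) = 4*s-6 := rfl
@[simp] lemma pos_bb (s : ℕ) : colPos (s, Col.bb) = 4*s-2 := rfl

def GapOK (p q : ℕ × Col) : Prop := q.1 + colMinGap p.1 p.2 q.2 ≤ p.1

lemma colPos_lt {p q : ℕ × Col} (hq : 1 ≤ q.1) (h : GapOK p q) : colPos q < colPos p := by
  obtain ⟨s, c⟩ := p; obtain ⟨s', c'⟩ := q
  simp only [GapOK] at h hq
  cases c <;> cases c' <;> simp only [pos_a, pos_b, pos_ab, pos_aa, pos_bb,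
    gap_a_a, gap_a_b, gap_a_ab, gap_a_aa, gap_a_bb, gap_b_a, gap_b_b, gap_b_ab, gap_b_aa,
    gap_b_bb, gap_ab_a, gap_ab_b, gap_ab_ab, gap_ab_aa, gap_ab_bb, gap_aa_a, gap_aa_b,
    gap_aa_ab, gap_aa_aa, gap_aa_bb, gap_bb_a, gap_bb_b, gap_bb_ab, gap_bb_aa, gap_bb_bb] at h ⊢ <;>
    first
      | omega
      | (split_ifs at h <;> omega)
end SilAux
namespace SilAux

abbrev Part := ℕ × Col

/-- Conditions on an individual part. -/
def Pok (p : Part) : Prop :=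
  1 ≤ p.1 ∧ ((p.2 = Col.aa ∨ p.2 = Col.bb) → p.1 % 2 = 1) ∧ p ≠ (1, Col.ab) ∧ p ≠ (1, Col.bb)

lemma isCol_nil : IsColPartition [] := by
  constructor
  · intro p hp; simp at hp
  · intro i hi; simp at hi

lemma isCol_cons {p : Part} {t : List Part} :
    IsColPartition (p :: t) ↔ Pok p ∧ IsColPartition t ∧ ∀ q ∈ t.head?, GapOK p q := by
  constructor
  · rintro ⟨h1, h2⟩
    refine ⟨h1 p (List.mem_cons_self), ⟨fun q hq => h1 q (List.mem_cons_of_mem _ hq), ?_⟩, ?_⟩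
    · intro i hi
      have := h2 (i+1) (by simp only [List.length_cons]; omega)
      simpa using this
    · intro q hq
      cases t with
      | nil => simp at hq
      | cons q' t' =>
        simp only [List.head?_cons, Option.mem_def, Option.some.injEq] at hq
        subst hq
        have := h2 0 (by simp)
        simpa [GapOK] using this
  · rintro ⟨hp, ⟨h1, h2⟩, hg⟩
    refine ⟨?_, ?_⟩
    · intro q hq
      rcases List.mem_cons.mp hq with rfl | hq
      · exact hp
      · exact h1 q hq
    · intro i hi
      cases i with
      | zero =>
        cases t with
        | nil => simp at hi
        | cons q' t' =>
          have := hg q' (by simp)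
          simpa [GapOK] using this
      | succ j =>
        have := h2 j (by simp only [List.length_cons] at hi; omega)
        simpa using this

lemma colPos_le_head : ∀ {l : List Part}, IsColPartition l → ∀ p ∈ l, colPos p ≤ colPos l.head!
  | [], _, p, hp => by simp at hp
  | q :: t, h, p, hp => by
    rw [isCol_cons] at h
    obtain ⟨hq, ht, hg⟩ := h
    rcases List.mem_cons.mp hp with rfl | hp'
    · simp
    · have ih := colPos_le_head ht p hp'
      cases t with
      | nil => simp at hp'
      | cons r t' =>
        have hgap : GapOK q r := hg r (by simp)
        have hr1 : 1 ≤ r.1 := (ht.1 r (List.mem_cons_self)).1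
        have hlt := colPos_lt hr1 hgap
        simp only [List.head!_cons] at ih ⊢
        omega

lemma parts_le_iff {l : List Part} (h : IsColPartition l) (K : Part) :
    (∀ p ∈ l, colPos p ≤ colPos K) ↔ ∀ q ∈ l.head?, colPos q ≤ colPos K := by
  cases l with
  | nil => simp
  | cons q t =>
    simp only [List.head?_cons, Option.mem_def, Option.some.injEq, forall_eq']
    constructor
    · intro H; exact H q (List.mem_cons_self)
    · intro H p hp
      exact le_trans (by simpa using colPos_le_head h p hp) H

def aW : Col → ℕ | Col.a => 1 | Col.ab => 1 | Col.aa => 2 | _ => 0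
def bW : Col → ℕ | Col.b => 1 | Col.ab => 1 | Col.bb => 2 | _ => 0

lemma aCt_cons (p : Part) (l : List Part) : aCt (p :: l) = aW p.2 + aCt l := by
  cases h : p.2 <;> simp [aCt, aW, List.countP_cons, h] <;> omega

lemma bCt_cons (p : Part) (l : List Part) : bCt (p :: l) = bW p.2 + bCt l := by
  cases h : p.2 <;> simp [bCt, bW, List.countP_cons, h] <;> omega

end SilAux
namespace SilAux
lemma aCt_nil : aCt [] = 0 := rfl
lemma bCt_nil : bCt [] = 0 := rfl
end SilAux
namespace SilAux

instance : Fintype Col :=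
  ⟨⟨{Col.a, Col.b, Col.ab, Col.aa, Col.bb}, by decide⟩, by intro c; cases c <;> decide⟩

/-- The defining predicate of `dct`. -/
def SL (K : Part) (u v n : ℤ) (l : List Part) : Prop :=
  IsColPartition l ∧ (∀ p ∈ l, colPos p ≤ colPos K) ∧
    ((l.map Prod.fst).sum : ℤ) = n ∧ (aCt l : ℤ) = u ∧ (bCt l : ℤ) = v

lemma dct_eq_card (K : Part) (u v n : ℤ) : dct K u v n = Nat.card {l : List Part // SL K u v n l} := rfl

lemma length_le_sum : ∀ l : List ℕ, (∀ x ∈ l, 1 ≤ x) → l.length ≤ l.sum := by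
  intro l
  induction l with
  | nil => simp
  | cons x t ih =>
    intro h
    have h1 := h x (List.mem_cons_self)
    have h2 := ih (fun y hy => h y (List.mem_cons_of_mem _ hy))
    simp only [List.length_cons, List.sum_cons]
    omega

lemma SL_finite (K : Part) (u v n : ℤ) : Finite {l : List Part // SL K u v n l} := by
  by_cases hn : 0 ≤ n
  · set N := n.toNat with hN
    have hfin : Set.Finite {l : List Part | SL K u v n l} := by
      have h1 : {l : List (Fin (N+1) × Col) | l.length ≤ N}.Finite := List.finite_length_le _ N
      have h2 := h1.image (List.map (fun p : Fin (N+1) × Col => ((p.1 : ℕ), p.2)))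
      refine h2.subset ?_
      rintro l ⟨hl, _, hsum, _, _⟩
      have hsum' : (l.map Prod.fst).sum = N := by omega
      have hpartle : ∀ p ∈ l, p.1 ≤ N := by
        intro p hp
        have : p.1 ∈ l.map Prod.fst := List.mem_map_of_mem hp
        have := List.le_sum_of_mem this
        omega
      have hlen : l.length ≤ N := by
        have := length_le_sum (l.map Prod.fst) (by
          intro x hx
          obtain ⟨p, hp, rfl⟩ := List.mem_map.mp hx
          exact (hl.1 p hp).1)
        simpa [hsum'] using this
      refine ⟨l.map (fun p => (⟨min p.1 N, by omega⟩, p.2)), by simpa using hlen, ?_⟩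
      simp only [List.map_map]
      conv_rhs => rw [← List.map_id l]
      refine List.map_congr_left ?_
      intro p hp
      have := hpartle p (by simpa using hp)
      simp only [Function.comp_apply, id_eq]
      have : min p.1 N = p.1 := by omega
      rw [this]
    exact hfin.to_subtype
  · refine @Finite.of_subsingleton _ ?_
    constructor
    rintro ⟨l, _, _, hsum, _⟩ _
    exfalso
    have : (0:ℤ) ≤ ((l.map Prod.fst).sum : ℤ) := Int.ofNat_nonneg _
    omega

end SilAux
namespace SilAux

lemma g1 {k : ℕ} {q : ℕ × Col} (hq : Pok q) (h : GapOK (2*k+2, Col.a) q) :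
    colPos q ≤ colPos (2*k+1, Col.ab) := by
  obtain ⟨s', c'⟩ := q
  obtain ⟨h1, h2, h3, h4⟩ := hq
  simp only [GapOK] at h
  cases c' <;> simp at h1 h2 h ⊢ <;> (try split_ifs at h) <;> omega

lemma g2 {k : ℕ} {q : ℕ × Col} (hq : Pok q) (h : colPos q ≤ colPos (2*k+1, Col.ab))
    (hne1 : q ≠ (2*k+1, Col.aa)) (hne2 : q ≠ (2*k+1, Col.ab)) :
    GapOK (2*k+2, Col.a) q := by
  obtain ⟨s', c'⟩ := q
  obtain ⟨h1, h2, h3, h4⟩ := hq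
  simp only [GapOK]
  cases c' <;> simp at h1 h2 h hne1 hne2 ⊢ <;> omega

lemma g3 {k : ℕ} {q : ℕ × Col} (hq : Pok q) (h : GapOK (2*k+3, Col.aa) q)
    (hne1 : q ≠ (2*k, Col.a)) (hne2 : q ≠ (2*k, Col.b)) :
    colPos q ≤ colPos (2*k, Col.ab) := by
  obtain ⟨s', c'⟩ := q
  obtain ⟨h1, h2, h3, h4⟩ := hq
  simp only [GapOK] at h
  cases c' <;> simp at h1 h2 h hne1 hne2 ⊢ <;> omega

lemma g4 {k : ℕ} {q : ℕ × Col} (hk : 1 ≤ k) (hq : Pok q) (h : colPos q ≤ colPos (2*k, Col.ab)) :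
    GapOK (2*k+3, Col.aa) q := by
  obtain ⟨s', c'⟩ := q
  obtain ⟨h1, h2, h3, h4⟩ := hq
  simp only [GapOK]
  cases c' <;> simp at h1 h2 h ⊢ <;> omega

lemma g5 {k : ℕ} {q : ℕ × Col} : GapOK (2*k, Col.a) q ↔ GapOK (2*k+1, Col.aa) q := by
  obtain ⟨s', c'⟩ := q
  simp only [GapOK]
  cases c' <;> simp <;> omega

lemma g6 {k : ℕ} {q : ℕ × Col} (hq : Pok q) :
    GapOK (2*k, Col.b) q ↔ GapOK (2*k+1, Col.ab) q := by
  obtain ⟨s', c'⟩ := q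
  obtain ⟨h1, h2, h3, h4⟩ := hq
  have p1 : (2*k+1) % 2 = 1 := by omega
  simp only [GapOK]
  cases c' <;> simp [p1] at h1 h2 ⊢ <;> omega

lemma g10 {k : ℕ} {q : ℕ × Col} (hq : Pok q) (h : colPos q ≤ colPos (2*k+3, Col.aa))
    (hne1 : q ≠ (2*k+2, Col.a)) (hne2 : q ≠ (2*k+3, Col.aa)) :
    colPos q ≤ colPos (2*k+2, Col.ab) := by
  obtain ⟨s', c'⟩ := q
  obtain ⟨h1, h2, h3, h4⟩ := hq
  cases c' <;> simp at h1 h2 h hne1 hne2 ⊢ <;> omega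

lemma g7a {k : ℕ} : GapOK (2*k+3, Col.aa) (2*k, Col.a) := by simp [GapOK]
lemma g7b {k : ℕ} : GapOK (2*k+3, Col.aa) (2*k, Col.b) := by simp [GapOK]
end SilAux
namespace SilAux

def fwd (k : ℕ) : List Part → List Part ⊕ (List Part ⊕ List Part)
  | [] => .inl []
  | p :: t =>
    if p = (2*k+2, Col.a) then .inr (.inl t)
    else if p = (2*k+3, Col.aa) then
      (match t with
       | [] => .inr (.inr [])
       | q :: t' =>
         if q = (2*k, Col.a) then .inr (.inl ((2*k+1, Col.aa) :: t'))
         else if q = (2*k, Col.b) then .inr (.inl ((2*k+1, Col.ab) :: t'))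
         else .inr (.inr (q :: t')))
    else .inl (p :: t)

def bwd (k : ℕ) : List Part ⊕ (List Part ⊕ List Part) → List Part
  | .inl l => l
  | .inr (.inl []) => [(2*k+2, Col.a)]
  | .inr (.inl (q :: t')) =>
      if q = (2*k+1, Col.aa) then (2*k+3, Col.aa) :: (2*k, Col.a) :: t'
      else if q = (2*k+1, Col.ab) then (2*k+3, Col.aa) :: (2*k, Col.b) :: t'
      else (2*k+2, Col.a) :: q :: t'
  | .inr (.inr l) => (2*k+3, Col.aa) :: l

lemma SL_build {K : Part} {u v n : ℤ} {l : List Part} (hcol : IsColPartition l)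
    (hpos : ∀ q ∈ l.head?, colPos q ≤ colPos K)
    (hsum : ((l.map Prod.fst).sum : ℤ) = n) (ha : (aCt l : ℤ) = u) (hb : (bCt l : ℤ) = v) :
    SL K u v n l := ⟨hcol, (parts_le_iff hcol K).mpr hpos, hsum, ha, hb⟩

def Qpred (k : ℕ) (u v n : ℤ) : List Part ⊕ (List Part ⊕ List Part) → Prop :=
  Sum.elim (SL (2*k+2, Col.ab) u v n)
    (Sum.elim (SL (2*k+1, Col.ab) (u-1) v (n-(2*k+2))) (SL (2*k, Col.ab) (u-2) v (n-(2*k+3))))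

variable {k : ℕ} {u v n : ℤ}

lemma ne1 : ((2*k+2 : ℕ), Col.a) ≠ ((2*k+3 : ℕ), Col.aa) := by simp
lemma ne2 : ((2*k+3 : ℕ), Col.aa) ≠ ((2*k+2 : ℕ), Col.a) := by simp
lemma ne3 : ((2*k, Col.b) : Part) ≠ (2*k, Col.a) := by simp
lemma ne4 : ((2*k+1, Col.ab) : Part) ≠ (2*k+1, Col.aa) := by simp
lemma ne5 : ((2*k, Col.a) : Part) ≠ (2*k, Col.b) := by simp
lemma ne6 : ((2*k+1, Col.aa) : Part) ≠ (2*k+1, Col.ab) := by simp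

lemma hbf (hk : 1 ≤ k) {l : List Part} (hl : SL (2*k+3, Col.aa) u v n l) :
    bwd k (fwd k l) = l := by
  obtain ⟨hcol, hpos, _, _, _⟩ := hl
  cases l with
  | nil => rfl
  | cons p t =>
    rw [isCol_cons] at hcol
    obtain ⟨hp, ht, hg⟩ := hcol
    by_cases hp1 : p = (2*k+2, Col.a)
    · subst hp1
      cases t with
      | nil => simp [fwd, bwd]
      | cons q t' =>
        have hgap := hg q (by simp)
        have hq1 : q ≠ (2*k+1, Col.aa) := by
          rintro rfl
          simp only [GapOK, gap_a_aa] at hgap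
          rw [if_neg (by omega)] at hgap
          omega
        have hq2 : q ≠ (2*k+1, Col.ab) := by
          rintro rfl
          simp only [GapOK, gap_a_ab] at hgap
          rw [if_neg (by omega)] at hgap
          omega
        simp [fwd, bwd, hq1, hq2]
    · by_cases hp2 : p = (2*k+3, Col.aa)
      · subst hp2
        cases t with
        | nil => simp [fwd, bwd, ne2]
        | cons q t' =>
          by_cases hq1 : q = (2*k, Col.a)
          · subst hq1; simp [fwd, bwd, ne2]
          · by_cases hq2 : q = (2*k, Col.b)
            · subst hq2; simp [fwd, bwd, ne2, ne3, ne4]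
            · simp [fwd, bwd, ne2, hq1, hq2]
      · simp [fwd, bwd, hp1, hp2]

lemma hfb (hk : 1 ≤ k) {x : List Part ⊕ (List Part ⊕ List Part)} (hx : Qpred k u v n x) :
    fwd k (bwd k x) = x := by
  rcases x with l | l | l
  · obtain ⟨hcol, hpos, _, _, _⟩ := hx
    cases l with
    | nil => rfl
    | cons p t =>
      have hposp : colPos p ≤ colPos (2*k+2, Col.ab) := hpos p (List.mem_cons_self)
      have hp1 : p ≠ (2*k+2, Col.a) := by
        rintro rfl; simp at hposp; omega
      have hp2 : p ≠ (2*k+3, Col.aa) := by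
        rintro rfl; simp at hposp; omega
      simp [fwd, bwd, hp1, hp2]
  · obtain ⟨hcol, hpos, _, _, _⟩ := hx
    cases l with
    | nil => simp [fwd, bwd]
    | cons q t' =>
      by_cases hq1 : q = (2*k+1, Col.aa)
      · subst hq1; simp [fwd, bwd, ne2]
      · by_cases hq2 : q = (2*k+1, Col.ab)
        · subst hq2; simp [fwd, bwd, ne2, ne4, ne3]
        · simp [fwd, bwd, hq1, hq2]
  · obtain ⟨hcol, hpos, _, _, _⟩ := hx
    cases l with
    | nil => simp [fwd, bwd, ne2]
    | cons q t' =>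
      have hposq : colPos q ≤ colPos (2*k, Col.ab) := hpos q (List.mem_cons_self)
      have hq1 : q ≠ (2*k, Col.a) := by
        rintro rfl; simp at hposq; omega
      have hq2 : q ≠ (2*k, Col.b) := by
        rintro rfl; simp at hposq; omega
      simp [fwd, bwd, ne2, hq1, hq2]

end SilAux
namespace SilAux

variable {k : ℕ} {u v n : ℤ}

lemma pok_mk_a2 (hk : 1 ≤ k) : Pok ((2*k+2, Col.a) : Part) := ⟨by omega, by simp, by simp, by simp⟩
lemma pok_mk_aa3 (hk : 1 ≤ k) : Pok ((2*k+3, Col.aa) : Part) :=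
  ⟨by omega, fun _ => by omega, by simp, by simp⟩
lemma pok_mk_aa1 (hk : 1 ≤ k) : Pok ((2*k+1, Col.aa) : Part) :=
  ⟨by omega, fun _ => by omega, by simp, by simp⟩
lemma pok_mk_ab1 (hk : 1 ≤ k) : Pok ((2*k+1, Col.ab) : Part) :=
  ⟨by omega, by simp, by simp; omega, by simp⟩
lemma pok_mk_a0 (hk : 1 ≤ k) : Pok ((2*k, Col.a) : Part) := ⟨by omega, by simp, by simp, by simp⟩
lemma pok_mk_b0 (hk : 1 ≤ k) : Pok ((2*k, Col.b) : Part) := ⟨by omega, by simp, by simp, by simp⟩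

lemma hfwd (hk : 1 ≤ k) {l : List Part} (hl : SL (2*k+3, Col.aa) u v n l) :
    Qpred k u v n (fwd k l) := by
  obtain ⟨hcol, hpos, hsum, ha, hb⟩ := hl
  cases l with
  | nil =>
    show SL _ u v n []
    exact ⟨isCol_nil, by simp, by simpa using hsum, by simpa using ha, by simpa using hb⟩
  | cons p t =>
    rw [isCol_cons] at hcol
    obtain ⟨hp, ht, hg⟩ := hcol
    have hposp : colPos p ≤ colPos (2*k+3, Col.aa) := hpos p (List.mem_cons_self)
    by_cases hp1 : p = (2*k+2, Col.a)
    · subst hp1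
      simp only [fwd, if_pos rfl]
      show SL _ (u-1) v (n-(2*k+2)) t
      refine SL_build ht (fun q hq => g1 (ht.1 q (List.mem_of_mem_head? hq)) (hg q hq)) ?_ ?_ ?_
      · simp only [List.map_cons, List.sum_cons] at hsum; push_cast at hsum ⊢; omega
      · rw [aCt_cons] at ha; simp only [aW] at ha; push_cast at ha ⊢; omega
      · rw [bCt_cons] at hb; simp only [bW] at hb; push_cast at hb ⊢; omega
    · by_cases hp2 : p = (2*k+3, Col.aa)
      · subst hp2
        simp only [fwd, if_neg hp1, if_pos rfl]
        cases t with
        | nil =>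
          show SL _ (u-2) v (n-(2*k+3)) []
          refine ⟨isCol_nil, by simp, ?_, ?_, ?_⟩ <;>
            simp only [List.map_cons, List.map_nil, List.sum_cons, List.sum_nil,
              aCt_cons, bCt_cons, aCt_nil, bCt_nil, aW, bW] at hsum ha hb ⊢ <;>
            push_cast at hsum ha hb ⊢ <;> omega
        | cons q t' =>
          rw [isCol_cons] at ht
          obtain ⟨hq, ht', hg'⟩ := ht
          have hgapq : GapOK (2*k+3, Col.aa) q := hg q (by simp)
          by_cases hq1 : q = (2*k, Col.a)
          · subst hq1
            simp only [if_pos rfl]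
            show SL _ (u-1) v (n-(2*k+2)) _
            refine SL_build (isCol_cons.mpr ⟨pok_mk_aa1 hk, ht', fun r hr => g5.mp (hg' r hr)⟩)
              ?_ ?_ ?_ ?_
            · intro r hr
              simp only [List.head?_cons, Option.mem_def, Option.some.injEq] at hr
              subst hr; simp; omega
            · simp only [List.map_cons, List.sum_cons] at hsum ⊢; push_cast at hsum ⊢; omega
            · rw [aCt_cons, aCt_cons] at ha; rw [aCt_cons]
              simp only [aW] at ha ⊢; push_cast at ha ⊢; omega
            · rw [bCt_cons, bCt_cons] at hb; rw [bCt_cons]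
              simp only [bW] at hb ⊢; push_cast at hb ⊢; omega
          · by_cases hq2 : q = (2*k, Col.b)
            · subst hq2
              simp only [if_neg ne3, if_pos rfl]
              show SL _ (u-1) v (n-(2*k+2)) _
              refine SL_build (isCol_cons.mpr ⟨pok_mk_ab1 hk, ht',
                fun r hr => (g6 (ht'.1 r (List.mem_of_mem_head? hr))).mp (hg' r hr)⟩) ?_ ?_ ?_ ?_
              · intro r hr
                simp only [List.head?_cons, Option.mem_def, Option.some.injEq] at hr
                subst hr; simp
              · simp only [List.map_cons, List.sum_cons] at hsum ⊢; push_cast at hsum ⊢; omega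
              · rw [aCt_cons, aCt_cons] at ha; rw [aCt_cons]
                simp only [aW] at ha ⊢; push_cast at ha ⊢; omega
              · rw [bCt_cons, bCt_cons] at hb; rw [bCt_cons]
                simp only [bW] at hb ⊢; push_cast at hb ⊢; omega
            · simp only [if_neg hq1, if_neg hq2]
              show SL _ (u-2) v (n-(2*k+3)) _
              refine SL_build (isCol_cons.mpr ⟨hq, ht', hg'⟩) ?_ ?_ ?_ ?_
              · intro r hr
                simp only [List.head?_cons, Option.mem_def, Option.some.injEq] at hr
                subst hr
                exact g3 hq hgapq hq1 hq2
              · simp only [List.map_cons, List.sum_cons] at hsum ⊢; push_cast at hsum ⊢; omega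
              · rw [aCt_cons] at ha; simp only [aW] at ha; push_cast at ha ⊢; omega
              · rw [bCt_cons] at hb; simp only [bW] at hb; push_cast at hb ⊢; omega
      · simp only [fwd, if_neg hp1, if_neg hp2]
        show SL _ u v n _
        refine SL_build (isCol_cons.mpr ⟨hp, ht, hg⟩) ?_ hsum ha hb
        intro r hr
        simp only [List.head?_cons, Option.mem_def, Option.some.injEq] at hr
        subst hr
        exact g10 hp hposp hp1 hp2

lemma hbwd (hk : 1 ≤ k) {x : List Part ⊕ (List Part ⊕ List Part)} (hx : Qpred k u v n x) :
    SL (2*k+3, Col.aa) u v n (bwd k x) := by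
  rcases x with l | l | l
  · obtain ⟨hcol, hpos, hsum, ha, hb⟩ := hx
    exact ⟨hcol, fun p hp => le_trans (hpos p hp) (by simp; omega), hsum, ha, hb⟩
  · obtain ⟨hcol, hpos, hsum, ha, hb⟩ := hx
    cases l with
    | nil =>
      show SL _ u v n [(2*k+2, Col.a)]
      refine SL_build (isCol_cons.mpr ⟨pok_mk_a2 hk, isCol_nil, by simp⟩) (by simp; omega) ?_ ?_ ?_ <;>
        simp only [List.map_cons, List.map_nil, List.sum_cons, List.sum_nil, aCt_cons, bCt_cons,
          aCt_nil, bCt_nil, aW, bW] at hsum ha hb ⊢ <;> push_cast at hsum ha hb ⊢ <;> omega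
    | cons q t' =>
      rw [isCol_cons] at hcol
      obtain ⟨hq, ht', hg'⟩ := hcol
      have hposq : colPos q ≤ colPos (2*k+1, Col.ab) := hpos q (List.mem_cons_self)
      by_cases hq1 : q = (2*k+1, Col.aa)
      · subst hq1
        rw [show bwd k (Sum.inr (Sum.inl ((2*k+1, Col.aa) :: t'))) =
          (2*k+3, Col.aa) :: (2*k, Col.a) :: t' from by simp [bwd]]
        refine SL_build (isCol_cons.mpr ⟨pok_mk_aa3 hk, isCol_cons.mpr ⟨pok_mk_a0 hk, ht',
          fun r hr => g5.mpr (hg' r hr)⟩, ?_⟩) (by simp) ?_ ?_ ?_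
        · intro r hr
          simp only [List.head?_cons, Option.mem_def, Option.some.injEq] at hr
          subst hr; exact g7a
        · simp only [List.map_cons, List.sum_cons] at hsum ⊢; push_cast at hsum ⊢; omega
        · rw [aCt_cons] at ha; rw [aCt_cons, aCt_cons]
          simp only [aW] at ha ⊢; push_cast at ha ⊢; omega
        · rw [bCt_cons] at hb; rw [bCt_cons, bCt_cons]
          simp only [bW] at hb ⊢; push_cast at hb ⊢; omega
      · by_cases hq2 : q = (2*k+1, Col.ab)
        · subst hq2
          rw [show bwd k (Sum.inr (Sum.inl ((2*k+1, Col.ab) :: t'))) =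
            (2*k+3, Col.aa) :: (2*k, Col.b) :: t' from by simp [bwd, ne4]]
          refine SL_build (isCol_cons.mpr ⟨pok_mk_aa3 hk, isCol_cons.mpr ⟨pok_mk_b0 hk, ht',
            fun r hr => (g6 (ht'.1 r (List.mem_of_mem_head? hr))).mpr (hg' r hr)⟩, ?_⟩)
            (by simp) ?_ ?_ ?_
          · intro r hr
            simp only [List.head?_cons, Option.mem_def, Option.some.injEq] at hr
            subst hr; exact g7b
          · simp only [List.map_cons, List.sum_cons] at hsum ⊢; push_cast at hsum ⊢; omega
          · rw [aCt_cons] at ha; rw [aCt_cons, aCt_cons]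
            simp only [aW] at ha ⊢; push_cast at ha ⊢; omega
          · rw [bCt_cons] at hb; rw [bCt_cons, bCt_cons]
            simp only [bW] at hb ⊢; push_cast at hb ⊢; omega
        · rw [show bwd k (Sum.inr (Sum.inl (q :: t'))) = (2*k+2, Col.a) :: q :: t' from by
            simp [bwd, hq1, hq2]]
          refine SL_build (isCol_cons.mpr ⟨pok_mk_a2 hk, isCol_cons.mpr ⟨hq, ht', hg'⟩, ?_⟩)
            (by simp; omega) ?_ ?_ ?_
          · intro r hr
            simp only [List.head?_cons, Option.mem_def, Option.some.injEq] at hr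
            subst hr; exact g2 hq hposq hq1 hq2
          · simp only [List.map_cons, List.sum_cons] at hsum ⊢; push_cast at hsum ⊢; omega
          · rw [aCt_cons] at ha ⊢; rw [aCt_cons]
            simp only [aW] at ha ⊢; push_cast at ha ⊢; omega
          · rw [bCt_cons] at hb ⊢; rw [bCt_cons]
            simp only [bW] at hb ⊢; push_cast at hb ⊢; omega
  · obtain ⟨hcol, hpos, hsum, ha, hb⟩ := hx
    show SL _ u v n ((2*k+3, Col.aa) :: l)
    refine SL_build (isCol_cons.mpr ⟨pok_mk_aa3 hk, hcol, ?_⟩) (by simp) ?_ ?_ ?_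
    · intro r hr
      have hrmem : r ∈ l := List.mem_of_mem_head? hr
      exact g4 hk (hcol.1 r hrmem) (hpos r hrmem)
    · simp only [List.map_cons, List.sum_cons] at hsum ⊢; push_cast at hsum ⊢; omega
    · rw [aCt_cons]; simp only [aW]; push_cast at ha ⊢; omega
    · rw [bCt_cons]; simp only [bW]; push_cast at hb ⊢; omega

end SilAux
namespace SilAux

lemma card_eq (k : ℕ) (hk : 1 ≤ k) (u v n : ℤ) :
    dct (2*k+3, Col.aa) u v n =
      dct (2*k+2, Col.ab) u v n + dct (2*k+1, Col.ab) (u-1) v (n-(2*(k:ℤ)+2)) +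
      dct (2*k, Col.ab) (u-2) v (n-(2*(k:ℤ)+3)) := by
  have hc2 : ((2*k+2 : ℕ) : ℤ) = 2*(k:ℤ)+2 := by push_cast; ring
  have hc3 : ((2*k+3 : ℕ) : ℤ) = 2*(k:ℤ)+3 := by push_cast; ring
  haveI fA : Finite {l : List Part // Qpred k u v n (Sum.inl l)} :=
    SL_finite (2*k+2, Col.ab) u v n
  haveI fB : Finite {l : List Part // Qpred k u v n (Sum.inr (Sum.inl l))} :=
    SL_finite (2*k+1, Col.ab) (u-1) v (n-(2*k+2))
  haveI fC : Finite {l : List Part // Qpred k u v n (Sum.inr (Sum.inr l))} :=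
    SL_finite (2*k, Col.ab) (u-2) v (n-(2*k+3))
  haveI fBC : Finite {x : List Part ⊕ List Part // Qpred k u v n (Sum.inr x)} :=
    Finite.of_equiv _ (Equiv.subtypeSum (p := fun x => Qpred k u v n (Sum.inr x))).symm
  have e1 : {l : List Part // SL (2*k+3, Col.aa) u v n l} ≃
      {x : List Part ⊕ (List Part ⊕ List Part) // Qpred k u v n x} :=
    { toFun := fun a => ⟨fwd k a.1, hfwd hk a.2⟩
      invFun := fun b => ⟨bwd k b.1, hbwd hk b.2⟩
      left_inv := fun a => Subtype.ext (hbf hk a.2)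
      right_inv := fun b => Subtype.ext (hfb hk b.2) }
  have h1 : dct (2*k+3, Col.aa) u v n =
      Nat.card {x : List Part ⊕ (List Part ⊕ List Part) // Qpred k u v n x} := by
    rw [dct_eq_card]; exact Nat.card_congr e1
  have h2 : Nat.card {x : List Part ⊕ (List Part ⊕ List Part) // Qpred k u v n x} =
      Nat.card {l : List Part // Qpred k u v n (Sum.inl l)} +
      Nat.card {x : List Part ⊕ List Part // Qpred k u v n (Sum.inr x)} := by
    rw [Nat.card_congr (Equiv.subtypeSum (p := Qpred k u v n)), Nat.card_sum]
  have h3 : Nat.card {x : List Part ⊕ List Part // Qpred k u v n (Sum.inr x)} =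
      Nat.card {l : List Part // Qpred k u v n (Sum.inr (Sum.inl l))} +
      Nat.card {l : List Part // Qpred k u v n (Sum.inr (Sum.inr l))} := by
    rw [Nat.card_congr (Equiv.subtypeSum (p := fun x => Qpred k u v n (Sum.inr x))),
      Nat.card_sum]
  have hA : Nat.card {l : List Part // Qpred k u v n (Sum.inl l)} =
      dct (2*k+2, Col.ab) u v n := rfl
  have hB : Nat.card {l : List Part // Qpred k u v n (Sum.inr (Sum.inl l))} =
      dct (2*k+1, Col.ab) (u-1) v (n-(2*(k:ℤ)+2)) := by
    rw [← hc2]; rfl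
  have hC : Nat.card {l : List Part // Qpred k u v n (Sum.inr (Sum.inr l))} =
      dct (2*k, Col.ab) (u-2) v (n-(2*(k:ℤ)+3)) := by
    rw [← hc3]; rfl
  rw [h1, h2, h3, hA, hB, hC]; omega

lemma dct_eq_zero_of_neg (K : Part) (u v n : ℤ) (h : u < 0 ∨ v < 0 ∨ n < 0) :
    dct K u v n = 0 := by
  rw [dct_eq_card]
  haveI : IsEmpty {l : List Part // SL K u v n l} := by
    constructor
    rintro ⟨l, _, _, hs, ha, hb⟩
    have h1 : (0:ℤ) ≤ ((l.map Prod.fst).sum : ℤ) := Int.ofNat_nonneg _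
    have h2 : (0:ℤ) ≤ ((aCt l : ℕ) : ℤ) := Int.ofNat_nonneg _
    have h3 : (0:ℤ) ≤ ((bCt l : ℕ) : ℤ) := Int.ofNat_nonneg _
    omega
  exact Nat.card_of_isEmpty

end SilAux


open MvPowerSeries in
/-- The key recurrence (4.5) for G_{(2k+3)_{a²}}, together with its
counting form. -/
theorem key_recurrence_aa (k : ℕ) (hk : 1 ≤ k) :
    (∀ (u v n : ℕ), 1 ≤ n →
      dct (2*k+3, Col.aa) u v n =
        dct (2*k+2, Col.ab) u v n +
        dct (2*k+1, Col.ab) ((u : ℤ) - 1) (v : ℤ) ((n : ℤ) - (2*k+2)) +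
        dct (2*k, Col.ab) ((u : ℤ) - 2) (v : ℤ) ((n : ℤ) - (2*k+3))) ∧
    Gf (2*k+3, Col.aa) =
      Gf (2*k+2, Col.ab) +
      (X 0 * X 2 ^ (2*k+2) : MvPowerSeries (Fin 3) ℚ) * Gf (2*k+1, Col.ab) +
      (X 0 ^ 2 * X 2 ^ (2*k+3) : MvPowerSeries (Fin 3) ℚ) * Gf (2*k, Col.ab) := by
  
  have key := SilAux.card_eq k hk
  constructor
  · intro u v n _
    exact key u v n
  · -- generating function form
    have hm1 : (X 0 * X 2 ^ (2*k+2) : MvPowerSeries (Fin 3) ℚ) =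
        monomial (Finsupp.single (0 : Fin 3) 1 + Finsupp.single (2 : Fin 3) (2*k+2)) 1 := by
      rw [X_def, X_pow_eq, monomial_mul_monomial, one_mul]
    have hm2 : (X 0 ^ 2 * X 2 ^ (2*k+3) : MvPowerSeries (Fin 3) ℚ) =
        monomial (Finsupp.single (0 : Fin 3) 2 + Finsupp.single (2 : Fin 3) (2*k+3)) 1 := by
      rw [X_pow_eq, X_pow_eq, monomial_mul_monomial, one_mul]
    apply MvPowerSeries.ext
    intro e
    rw [map_add, map_add, hm1, hm2, coeff_monomial_mul, coeff_monomial_mul]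
    have hle1 : (Finsupp.single (0 : Fin 3) 1 + Finsupp.single (2 : Fin 3) (2*k+2) ≤ e) ↔
        (1 ≤ e 0 ∧ 2*k+2 ≤ e 2) := by
      constructor
      · intro h
        constructor
        · have := h 0; simpa using this
        · have := h 2; simpa using this
      · rintro ⟨h1, h2⟩ i
        fin_cases i <;> simp [Finsupp.add_apply, Finsupp.single_apply] <;> omega
    have hle2 : (Finsupp.single (0 : Fin 3) 2 + Finsupp.single (2 : Fin 3) (2*k+3) ≤ e) ↔
        (2 ≤ e 0 ∧ 2*k+3 ≤ e 2) := by
      constructor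
      · intro h
        constructor
        · have := h 0; simpa using this
        · have := h 2; simpa using this
      · rintro ⟨h1, h2⟩ i
        fin_cases i <;> simp [Finsupp.add_apply, Finsupp.single_apply] <;> omega
    have hGf : ∀ K (f : Fin 3 →₀ ℕ), (coeff f (Gf K)) = (dct K (f 0) (f 1) (f 2) : ℚ) :=
      fun K f => rfl
    rw [hGf, hGf]
    have hrec := key (e 0) (e 1) (e 2)
    split_ifs with h1 h2 h2
    · -- both subtractions possible
      obtain ⟨ha1, hn1⟩ := hle1.mp h1
      obtain ⟨ha2, hn2⟩ := hle2.mp h2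
      rw [one_mul, one_mul, hGf, hGf]
      have q1 : (e - (Finsupp.single (0 : Fin 3) 1 + Finsupp.single (2 : Fin 3) (2*k+2)) : Fin 3 →₀ ℕ) 0 = e 0 - 1 := by
        simp [Finsupp.tsub_apply, Finsupp.add_apply, Finsupp.single_apply]
      have q2 : (e - (Finsupp.single (0 : Fin 3) 1 + Finsupp.single (2 : Fin 3) (2*k+2)) : Fin 3 →₀ ℕ) 1 = e 1 := by
        simp [Finsupp.tsub_apply, Finsupp.add_apply, Finsupp.single_apply]
      have q3 : (e - (Finsupp.single (0 : Fin 3) 1 + Finsupp.single (2 : Fin 3) (2*k+2)) : Fin 3 →₀ ℕ) 2 = e 2 - (2*k+2) := by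
        simp [Finsupp.tsub_apply, Finsupp.add_apply, Finsupp.single_apply]
      have r1 : (e - (Finsupp.single (0 : Fin 3) 2 + Finsupp.single (2 : Fin 3) (2*k+3)) : Fin 3 →₀ ℕ) 0 = e 0 - 2 := by
        simp [Finsupp.tsub_apply, Finsupp.add_apply, Finsupp.single_apply]
      have r2 : (e - (Finsupp.single (0 : Fin 3) 2 + Finsupp.single (2 : Fin 3) (2*k+3)) : Fin 3 →₀ ℕ) 1 = e 1 := by
        simp [Finsupp.tsub_apply, Finsupp.add_apply, Finsupp.single_apply]
      have r3 : (e - (Finsupp.single (0 : Fin 3) 2 + Finsupp.single (2 : Fin 3) (2*k+3)) : Fin 3 →₀ ℕ) 2 = e 2 - (2*k+3) := by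
        simp [Finsupp.tsub_apply, Finsupp.add_apply, Finsupp.single_apply]
      rw [q1, q2, q3, r1, r2, r3]
      have c1 : ((e 0 - 1 : ℕ) : ℤ) = (e 0 : ℤ) - 1 := by omega
      have c2 : ((e 0 - 2 : ℕ) : ℤ) = (e 0 : ℤ) - 2 := by omega
      have c3 : ((e 2 - (2*k+2) : ℕ) : ℤ) = (e 2 : ℤ) - (2*(k:ℤ)+2) := by push_cast; omega
      have c4 : ((e 2 - (2*k+3) : ℕ) : ℤ) = (e 2 : ℤ) - (2*(k:ℤ)+3) := by push_cast; omega
      rw [hrec, c1, c2, c3, c4]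
      push_cast
      ring
    · obtain ⟨ha1, hn1⟩ := hle1.mp h1
      rw [one_mul, hGf]
      have hz : dct (2*k, Col.ab) ((e 0 : ℤ) - 2) (e 1) ((e 2 : ℤ) - (2*(k:ℤ)+3)) = 0 := by
        apply SilAux.dct_eq_zero_of_neg
        rcases not_and_or.mp (fun hc => h2 (hle2.mpr hc)) with hc | hc
        · left; omega
        · right; right
          have : ¬((2*k+3 : ℕ) ≤ e 2) := hc
          push_cast at this ⊢
          omega
      have q1 : (e - (Finsupp.single (0 : Fin 3) 1 + Finsupp.single (2 : Fin 3) (2*k+2)) : Fin 3 →₀ ℕ) 0 = e 0 - 1 := by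
        simp [Finsupp.tsub_apply, Finsupp.add_apply, Finsupp.single_apply]
      have q2 : (e - (Finsupp.single (0 : Fin 3) 1 + Finsupp.single (2 : Fin 3) (2*k+2)) : Fin 3 →₀ ℕ) 1 = e 1 := by
        simp [Finsupp.tsub_apply, Finsupp.add_apply, Finsupp.single_apply]
      have q3 : (e - (Finsupp.single (0 : Fin 3) 1 + Finsupp.single (2 : Fin 3) (2*k+2)) : Fin 3 →₀ ℕ) 2 = e 2 - (2*k+2) := by
        simp [Finsupp.tsub_apply, Finsupp.add_apply, Finsupp.single_apply]
      rw [q1, q2, q3]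
      have c1 : ((e 0 - 1 : ℕ) : ℤ) = (e 0 : ℤ) - 1 := by omega
      have c3 : ((e 2 - (2*k+2) : ℕ) : ℤ) = (e 2 : ℤ) - (2*(k:ℤ)+2) := by push_cast; omega
      rw [hrec, c1, c3, hz]
      push_cast
      ring
    · obtain ⟨ha2, hn2⟩ := hle2.mp h2
      rw [one_mul, hGf]
      have hz : dct (2*k+1, Col.ab) ((e 0 : ℤ) - 1) (e 1) ((e 2 : ℤ) - (2*(k:ℤ)+2)) = 0 := by
        apply SilAux.dct_eq_zero_of_neg
        rcases not_and_or.mp (fun hc => h1 (hle1.mpr hc)) with hc | hc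
        · left; omega
        · right; right
          have : ¬((2*k+2 : ℕ) ≤ e 2) := hc
          push_cast at this ⊢
          omega
      have r1 : (e - (Finsupp.single (0 : Fin 3) 2 + Finsupp.single (2 : Fin 3) (2*k+3)) : Fin 3 →₀ ℕ) 0 = e 0 - 2 := by
        simp [Finsupp.tsub_apply, Finsupp.add_apply, Finsupp.single_apply]
      have r2 : (e - (Finsupp.single (0 : Fin 3) 2 + Finsupp.single (2 : Fin 3) (2*k+3)) : Fin 3 →₀ ℕ) 1 = e 1 := by
        simp [Finsupp.tsub_apply, Finsupp.add_apply, Finsupp.single_apply]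
      have r3 : (e - (Finsupp.single (0 : Fin 3) 2 + Finsupp.single (2 : Fin 3) (2*k+3)) : Fin 3 →₀ ℕ) 2 = e 2 - (2*k+3) := by
        simp [Finsupp.tsub_apply, Finsupp.add_apply, Finsupp.single_apply]
      rw [r1, r2, r3]
      have c2 : ((e 0 - 2 : ℕ) : ℤ) = (e 0 : ℤ) - 2 := by omega
      have c4 : ((e 2 - (2*k+3) : ℕ) : ℤ) = (e 2 : ℤ) - (2*(k:ℤ)+3) := by push_cast; omega
      rw [hrec, c2, c4, hz]
      push_cast
      ring
    · have hz1 : dct (2*k+1, Col.ab) ((e 0 : ℤ) - 1) (e 1) ((e 2 : ℤ) - (2*(k:ℤ)+2)) = 0 := by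
        apply SilAux.dct_eq_zero_of_neg
        rcases not_and_or.mp (fun hc => h1 (hle1.mpr hc)) with hc | hc
        · left; omega
        · right; right
          have : ¬((2*k+2 : ℕ) ≤ e 2) := hc
          push_cast at this ⊢
          omega
      have hz2 : dct (2*k, Col.ab) ((e 0 : ℤ) - 2) (e 1) ((e 2 : ℤ) - (2*(k:ℤ)+3)) = 0 := by
        apply SilAux.dct_eq_zero_of_neg
        rcases not_and_or.mp (fun hc => h2 (hle2.mpr hc)) with hc | hc
        · left; omega
        · right; right
          have : ¬((2*k+3 : ℕ) ≤ e 2) := hc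
          push_cast at this ⊢
          omega
      rw [hrec, hz1, hz2]
      push_cast
      ring
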